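/- Let f_{G_R,G_M}(r) denote the fixation probability of the two-graph Moran process with resident graph G_R, mutant graph G_M, and mutant relative fitness r > 0, started from a single uniformly random mutant. Then f_{G_R,G_M}(r) ≤ 1 − f_{G_M,G_R}(1/r). -/

import Mathlib

open Finset

variable {V : Type*} [Fintype V] [DecidableEq V]

/-- One-step transition probability of the two-graph Moran process with relative fitness `r`,
resident weight matrix `wR` and mutant weight matrix `wM`, from mutant set `S` to set `T`.
An individual is chosen with probability proportional to its fitness (residents `1`,
mutants `r`) and reproduces on a neighbour in its own graph. -/
noncomputable def moranStep (r : ℝ) (wR wM : V → V → ℝ) (S T : Finset V) : ℝ :=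
  ((∑ i ∈ S, ∑ j ∈ Sᶜ, (if T = insert j S then r * wM i j else 0)) +
   (∑ j ∈ Sᶜ, ∑ i ∈ S, (if T = S.erase i then wR j i else 0)) +
   (if T = S then (∑ i ∈ S, ∑ j ∈ S, r * wM i j) + (∑ i ∈ Sᶜ, ∑ j ∈ Sᶜ, wR i j) else 0))
  / (S.card * r + ((Fintype.card V : ℝ) - S.card))

/-- `t`-step transition probabilities of the two-graph Moran process. -/
noncomputable def moranIter (r : ℝ) (wR wM : V → V → ℝ) : ℕ → Finset V → Finset V → ℝ
  | 0 => fun S T => if T = S then 1 else 0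
  | (t + 1) => fun S T => ∑ U : Finset V, moranStep r wR wM S U * moranIter r wR wM t U T

/-- Fixation probability of the two-graph Moran process started from mutant set `S`:
the probability of eventual absorption at the all-mutant state `V` (the probability of
being at the absorbing state `univ` is nondecreasing in `t`, so the limit is the `⨆`). -/
noncomputable def fixProbFrom (r : ℝ) (wR wM : V → V → ℝ) (S : Finset V) : ℝ :=
  ⨆ t : ℕ, moranIter r wR wM t S Finset.univ

/-- Fixation probability of the two-graph Moran process started from a single
uniformly random mutant. -/
noncomputable def fixProb (r : ℝ) (wR wM : V → V → ℝ) : ℝ :=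
  (∑ u : V, fixProbFrom r wR wM {u}) / (Fintype.card V)

/-- A weight matrix is a strongly connected graph structure: positive-weight edges
connect every ordered pair of vertices. -/
def StronglyConnectedW (w : V → V → ℝ) : Prop :=
  ∀ i j : V, Relation.ReflTransGen (fun a b => 0 < w a b) i j

/-- Admissible weight matrix: nonnegative, zero diagonal, rows sum to 1. -/
def IsWeightMatrix (w : V → V → ℝ) : Prop :=
  (∀ i j, 0 ≤ w i j) ∧ (∀ i, w i i = 0) ∧ (∀ i, ∑ j, w i j = 1)


-- AUX PART (to be inserted before theorem)
namespace MirrorAux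

open Finset

lemma ciSup_succ {a : ℕ → ℝ} (hm : Monotone a) (hb : BddAbove (Set.range a)) :
    (⨆ t, a (t + 1)) = ⨆ t, a t := by
  apply le_antisymm
  · exact ciSup_le fun t => le_ciSup hb (t + 1)
  · refine ciSup_le fun t => ?_
    calc a t ≤ a (t + 1) := hm (Nat.le_succ t)
      _ ≤ ⨆ t, a (t + 1) := le_ciSup (hb.mono (by rintro x ⟨t, rfl⟩; exact ⟨t+1, rfl⟩)) t

lemma ciSup_sum {ι : Type*} [Fintype ι] (f : ι → ℕ → ℝ)
    (hm : ∀ i, Monotone (f i)) (hb : ∀ i, BddAbove (Set.range (f i))) :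
    (⨆ t, ∑ i, f i t) = ∑ i, ⨆ t, f i t := by
  have h1 : ∀ i, Filter.Tendsto (f i) Filter.atTop (nhds (⨆ t, f i t)) := fun i =>
    tendsto_atTop_ciSup (hm i) (hb i)
  have h2 : Filter.Tendsto (fun t => ∑ i, f i t) Filter.atTop (nhds (∑ i, ⨆ t, f i t)) :=
    tendsto_finset_sum _ fun i _ => h1 i
  have hm2 : Monotone fun t => ∑ i, f i t := fun s t hst =>
    Finset.sum_le_sum fun i _ => hm i hst
  have hb2 : BddAbove (Set.range fun t => ∑ i, f i t) := by
    refine ⟨∑ i, ⨆ t, f i t, ?_⟩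
    rintro x ⟨t, rfl⟩
    exact Finset.sum_le_sum fun i _ => le_ciSup (hb i) t
  exact tendsto_nhds_unique (tendsto_atTop_ciSup hm2 hb2) h2

lemma sup_add_sup_le_one {a b : ℕ → ℝ} (hma : Monotone a) (hmb : Monotone b)
    (hba : BddAbove (Set.range a)) (hbb : BddAbove (Set.range b))
    (hab : ∀ t, a t + b t ≤ 1) : (⨆ t, a t) + (⨆ t, b t) ≤ 1 := by
  have h1 : (⨆ t, a t) ≤ 1 - ⨆ t, b t := by
    refine ciSup_le fun s => ?_
    have h2 : (⨆ t, b t) ≤ 1 - a s := by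
      refine ciSup_le fun t => ?_
      have := hab (max s t)
      have h3 := hma (le_max_left s t)
      have h4 := hmb (le_max_right s t)
      linarith
    linarith
  linarith

variable {V : Type*} [Fintype V] [DecidableEq V]

noncomputable def kiter (P : Finset V → Finset V → ℝ) : ℕ → Finset V → Finset V → ℝ
  | 0 => fun S T => if T = S then 1 else 0
  | (t + 1) => fun S T => ∑ U : Finset V, P S U * kiter P t U T

noncomputable def hfix (P : Finset V → Finset V → ℝ) (S : Finset V) : ℝ :=
  ⨆ t : ℕ, kiter P t S Finset.univ

variable {P : Finset V → Finset V → ℝ}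

lemma kiter_nonneg (hP0 : ∀ S T, 0 ≤ P S T) (t : ℕ) (S T : Finset V) :
    0 ≤ kiter P t S T := by
  induction t generalizing S T with
  | zero => simp only [kiter]; positivity
  | succ t ih =>
    simp only [kiter]
    exact Finset.sum_nonneg fun U _ => mul_nonneg (hP0 S U) (ih U T)

lemma kiter_sum (hP1 : ∀ S, ∑ T, P S T = 1) (t : ℕ) (S : Finset V) :
    ∑ T, kiter P t S T = 1 := by
  induction t generalizing S with
  | zero => simp [kiter]
  | succ t ih =>
    simp only [kiter]
    rw [Finset.sum_comm]
    calc ∑ U, ∑ T, P S U * kiter P t U T = ∑ U : Finset V, P S U * 1 := by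
          refine Finset.sum_congr rfl fun U _ => ?_
          rw [← Finset.mul_sum, ih U]
      _ = 1 := by simp [hP1 S]

lemma kiter_le_one (hP0 : ∀ S T, 0 ≤ P S T) (hP1 : ∀ S, ∑ T, P S T = 1)
    (t : ℕ) (S T : Finset V) : kiter P t S T ≤ 1 := by
  calc kiter P t S T ≤ ∑ T', kiter P t S T' :=
        Finset.single_le_sum (fun T' _ => kiter_nonneg hP0 t S T') (Finset.mem_univ T)
    _ = 1 := kiter_sum hP1 t S

lemma kiter_succ_right (t : ℕ) (S T : Finset V) :
    kiter P (t + 1) S T = ∑ U : Finset V, kiter P t S U * P U T := by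
  induction t generalizing S T with
  | zero =>
    simp only [kiter, mul_ite, mul_one, mul_zero, ite_mul, one_mul, zero_mul]
    rw [Finset.sum_ite_eq, Finset.sum_ite_eq']
    simp
  | succ t ih =>
    simp only [kiter]
    calc ∑ U : Finset V, P S U * kiter P (t+1) U T
        = ∑ U : Finset V, P S U * ∑ W : Finset V, kiter P t U W * P W T := by
          refine Finset.sum_congr rfl fun U _ => ?_; rw [ih]
      _ = ∑ U : Finset V, ∑ W : Finset V, P S U * (kiter P t U W * P W T) := by
          refine Finset.sum_congr rfl fun U _ => ?_; rw [Finset.mul_sum]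
      _ = ∑ W : Finset V, (∑ U : Finset V, P S U * kiter P t U W) * P W T := by
          rw [Finset.sum_comm]
          refine Finset.sum_congr rfl fun W _ => ?_
          rw [Finset.sum_mul]
          refine Finset.sum_congr rfl fun U _ => by ring
      _ = _ := rfl

lemma kiter_univ_mono (hP0 : ∀ S T, 0 ≤ P S T) (habs : P Finset.univ Finset.univ = 1)
    (S : Finset V) : Monotone fun t => kiter P t S (univ : Finset V) := by
  refine monotone_nat_of_le_succ fun t => ?_
  rw [kiter_succ_right]
  calc kiter P t S univ = kiter P t S univ * P univ univ := by rw [habs, mul_one]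
    _ ≤ ∑ U : Finset V, kiter P t S U * P U univ :=
        Finset.single_le_sum (fun U _ => mul_nonneg (kiter_nonneg hP0 t S U) (hP0 U univ))
          (Finset.mem_univ univ)

lemma bddAbove_kiter (hP0 : ∀ S T, 0 ≤ P S T) (hP1 : ∀ S, ∑ T, P S T = 1) (S : Finset V) :
    BddAbove (Set.range fun t => kiter P t S (univ : Finset V)) :=
  ⟨1, by rintro x ⟨t, rfl⟩; exact kiter_le_one hP0 hP1 t S univ⟩

lemma kiter_le_hfix (hP0 : ∀ S T, 0 ≤ P S T) (hP1 : ∀ S, ∑ T, P S T = 1)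
    (t : ℕ) (S : Finset V) : kiter P t S univ ≤ hfix P S :=
  le_ciSup (bddAbove_kiter hP0 hP1 S) t

lemma hfix_nonneg (hP0 : ∀ S T, 0 ≤ P S T) (hP1 : ∀ S, ∑ T, P S T = 1) (S : Finset V) :
    0 ≤ hfix P S :=
  le_trans (kiter_nonneg hP0 0 S univ) (kiter_le_hfix hP0 hP1 0 S)

lemma hfix_le_one (hP0 : ∀ S T, 0 ≤ P S T) (hP1 : ∀ S, ∑ T, P S T = 1) (S : Finset V) :
    hfix P S ≤ 1 :=
  ciSup_le fun t => kiter_le_one hP0 hP1 t S univ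

lemma P_univ_eq_zero (hP0 : ∀ S T, 0 ≤ P S T) (hP1 : ∀ S, ∑ T, P S T = 1)
    (habs : P Finset.univ Finset.univ = 1) {U : Finset V} (hU : U ≠ univ) :
    P univ U = 0 := by
  have hsplit : P univ univ + ∑ T ∈ (Finset.univ : Finset (Finset V)).erase univ, P univ T = 1 := by
    rw [Finset.add_sum_erase _ _ (Finset.mem_univ _)]
    exact hP1 univ
  have h0 : ∑ T ∈ (Finset.univ : Finset (Finset V)).erase univ, P univ T = 0 := by
    rw [habs] at hsplit; linarith
  have := (Finset.sum_eq_zero_iff_of_nonneg (fun T _ => hP0 univ T)).mp h0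
  exact this U (Finset.mem_erase.mpr ⟨hU, Finset.mem_univ U⟩)

lemma kiter_univ_univ (hP0 : ∀ S T, 0 ≤ P S T) (hP1 : ∀ S, ∑ T, P S T = 1)
    (habs : P Finset.univ Finset.univ = 1) (t : ℕ) :
    kiter P t (univ : Finset V) univ = 1 := by
  induction t with
  | zero => simp [kiter]
  | succ t ih =>
    simp only [kiter]
    rw [Finset.sum_eq_single (univ : Finset V)]
    · rw [habs, ih, mul_one]
    · intro U _ hU; rw [P_univ_eq_zero hP0 hP1 habs hU, zero_mul]
    · intro h; exact absurd (Finset.mem_univ _) h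

lemma hfix_univ (hP0 : ∀ S T, 0 ≤ P S T) (hP1 : ∀ S, ∑ T, P S T = 1)
    (habs : P Finset.univ Finset.univ = 1) : hfix P (univ : Finset V) = 1 := by
  have : (fun t => kiter P t (univ : Finset V) univ) = fun _ => (1 : ℝ) := by
    funext t; exact kiter_univ_univ hP0 hP1 habs t
  rw [hfix, this, ciSup_const]

lemma hfix_harmonic (hP0 : ∀ S T, 0 ≤ P S T) (hP1 : ∀ S, ∑ T, P S T = 1)
    (habs : P Finset.univ Finset.univ = 1) (S : Finset V) :
    hfix P S = ∑ U : Finset V, P S U * hfix P U := by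
  have key : hfix P S = ⨆ t, kiter P (t + 1) S univ :=
    (ciSup_succ (kiter_univ_mono hP0 habs S) (bddAbove_kiter hP0 hP1 S)).symm
  rw [key]
  have : ∀ t, kiter P (t + 1) S (univ : Finset V) =
      ∑ U : Finset V, P S U * kiter P t U univ := fun t => rfl
  simp only [this]
  rw [ciSup_sum (fun U t => P S U * kiter P t U univ)
    (fun U => fun s t hst => mul_le_mul_of_nonneg_left (kiter_univ_mono hP0 habs U hst) (hP0 S U))
    (fun U => ⟨P S U, by
      rintro x ⟨t, rfl⟩
      exact mul_le_of_le_one_right (hP0 S U) (kiter_le_one hP0 hP1 t U univ)⟩)]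
  exact Finset.sum_congr rfl fun U _ => (Real.mul_iSup_of_nonneg (hP0 S U) _).symm

lemma hfix_le_harmonic (hP0 : ∀ S T, 0 ≤ P S T) (g : Finset V → ℝ)
    (hg0 : ∀ X, 0 ≤ g X) (hgu : g univ = 1)
    (hgh : ∀ X, ∑ U : Finset V, P X U * g U = g X) (S : Finset V) : hfix P S ≤ g S := by
  have key : ∀ t S, kiter P t S (univ : Finset V) ≤ g S := by
    intro t
    induction t with
    | zero =>
      intro S
      by_cases h : (univ : Finset V) = S
      · subst h; simp [kiter, hgu]
      · simp [kiter, h, hg0 S]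
    | succ t ih =>
      intro S
      calc kiter P (t+1) S univ = ∑ U : Finset V, P S U * kiter P t U univ := rfl
        _ ≤ ∑ U : Finset V, P S U * g U :=
            Finset.sum_le_sum fun U _ => mul_le_mul_of_nonneg_left (ih U) (hP0 S U)
        _ = g S := hgh S
  exact ciSup_le fun t => key t S

end MirrorAux
-- SPEC PART
namespace MirrorAux
open Finset
variable {V : Type*} [Fintype V] [DecidableEq V]

noncomputable def mnum (r : ℝ) (wR wM : V → V → ℝ) (S T : Finset V) : ℝ :=
  (∑ i ∈ S, ∑ j ∈ Sᶜ, (if T = insert j S then r * wM i j else 0)) +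
  (∑ j ∈ Sᶜ, ∑ i ∈ S, (if T = S.erase i then wR j i else 0)) +
  (if T = S then (∑ i ∈ S, ∑ j ∈ S, r * wM i j) + (∑ i ∈ Sᶜ, ∑ j ∈ Sᶜ, wR i j) else 0)

noncomputable def fit (r : ℝ) (S : Finset V) : ℝ :=
  (S.card : ℝ) * r + ((Fintype.card V : ℝ) - S.card)

lemma moranStep_eq (r : ℝ) (wR wM : V → V → ℝ) (S T : Finset V) :
    moranStep r wR wM S T = mnum r wR wM S T / fit r S := rfl

lemma fit_pos [Nonempty V] {r : ℝ} (hr : 0 < r) (S : Finset V) : 0 < fit r S := by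
  have hcard : (S.card : ℝ) ≤ Fintype.card V := by
    exact_mod_cast Finset.card_le_univ S
  have hme : 0 < min r 1 := lt_min hr one_pos
  have h1 : (S.card : ℝ) * min r 1 ≤ (S.card : ℝ) * r :=
    mul_le_mul_of_nonneg_left (min_le_left r 1) (Nat.cast_nonneg _)
  have h2 : ((Fintype.card V : ℝ) - S.card) * min r 1 ≤ (Fintype.card V : ℝ) - S.card := by
    nlinarith [min_le_right r 1]
  have h3 : (0 : ℝ) < (Fintype.card V : ℝ) * min r 1 := by
    have : 0 < (Fintype.card V : ℝ) := by exact_mod_cast Fintype.card_pos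
    positivity
  unfold fit
  nlinarith

lemma mnum_nonneg {r : ℝ} (hr : 0 < r) {wR wM : V → V → ℝ}
    (hwR : IsWeightMatrix wR) (hwM : IsWeightMatrix wM) (S T : Finset V) :
    0 ≤ mnum r wR wM S T := by
  unfold mnum
  have t1 : (0:ℝ) ≤ ∑ i ∈ S, ∑ j ∈ Sᶜ, (if T = insert j S then r * wM i j else 0) :=
    Finset.sum_nonneg fun i _ => Finset.sum_nonneg fun j _ => by
      split
      · exact mul_nonneg hr.le (hwM.1 i j)
      · exact le_refl 0
  have t2 : (0:ℝ) ≤ ∑ j ∈ Sᶜ, ∑ i ∈ S, (if T = S.erase i then wR j i else 0) :=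
    Finset.sum_nonneg fun j _ => Finset.sum_nonneg fun i _ => by
      split
      · exact hwR.1 j i
      · exact le_refl 0
  have t3 : (0:ℝ) ≤ (if T = S then (∑ i ∈ S, ∑ j ∈ S, r * wM i j) + (∑ i ∈ Sᶜ, ∑ j ∈ Sᶜ, wR i j) else 0) := by
    split
    · refine add_nonneg ?_ ?_
      · exact Finset.sum_nonneg fun i _ => Finset.sum_nonneg fun j _ =>
          mul_nonneg hr.le (hwM.1 i j)
      · exact Finset.sum_nonneg fun i _ => Finset.sum_nonneg fun j _ => hwR.1 i j
    · exact le_refl 0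
  linarith

lemma moranStep_nonneg [Nonempty V] {r : ℝ} (hr : 0 < r) {wR wM : V → V → ℝ}
    (hwR : IsWeightMatrix wR) (hwM : IsWeightMatrix wM) (S T : Finset V) :
    0 ≤ moranStep r wR wM S T := by
  rw [moranStep_eq]
  exact div_nonneg (mnum_nonneg hr hwR hwM S T) (fit_pos hr S).le

lemma mnum_sum {r : ℝ} {wR wM : V → V → ℝ}
    (hwR : IsWeightMatrix wR) (hwM : IsWeightMatrix wM) (S : Finset V) :
    ∑ T, mnum r wR wM S T = fit r S := by
  unfold mnum
  rw [Finset.sum_add_distrib, Finset.sum_add_distrib]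
  have e1 : ∑ T : Finset V, ∑ i ∈ S, ∑ j ∈ Sᶜ, (if T = insert j S then r * wM i j else 0)
      = ∑ i ∈ S, ∑ j ∈ Sᶜ, r * wM i j := by
    rw [Finset.sum_comm]
    refine Finset.sum_congr rfl fun i _ => ?_
    rw [Finset.sum_comm]
    refine Finset.sum_congr rfl fun j _ => ?_
    simp
  have e2 : ∑ T : Finset V, ∑ j ∈ Sᶜ, ∑ i ∈ S, (if T = S.erase i then wR j i else 0)
      = ∑ j ∈ Sᶜ, ∑ i ∈ S, wR j i := by
    rw [Finset.sum_comm]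
    refine Finset.sum_congr rfl fun j _ => ?_
    rw [Finset.sum_comm]
    refine Finset.sum_congr rfl fun i _ => ?_
    simp
  have e3 : ∑ T : Finset V, (if T = S then (∑ i ∈ S, ∑ j ∈ S, r * wM i j) + (∑ i ∈ Sᶜ, ∑ j ∈ Sᶜ, wR i j) else 0)
      = (∑ i ∈ S, ∑ j ∈ S, r * wM i j) + (∑ i ∈ Sᶜ, ∑ j ∈ Sᶜ, wR i j) := by
    simp
  rw [e1, e2, e3]
  have hM : (∑ i ∈ S, ∑ j ∈ Sᶜ, r * wM i j) + (∑ i ∈ S, ∑ j ∈ S, r * wM i j)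
      = (S.card : ℝ) * r := by
    rw [← Finset.sum_add_distrib]
    have : ∀ i ∈ S, (∑ j ∈ Sᶜ, r * wM i j) + (∑ j ∈ S, r * wM i j) = r := by
      intro i _
      rw [add_comm, Finset.sum_add_sum_compl, ← Finset.mul_sum, hwM.2.2 i, mul_one]
    rw [Finset.sum_congr rfl this, Finset.sum_const, nsmul_eq_mul, mul_comm]
  have hR : (∑ j ∈ Sᶜ, ∑ i ∈ S, wR j i) + (∑ i ∈ Sᶜ, ∑ j ∈ Sᶜ, wR i j)
      = ((Fintype.card V : ℝ) - S.card) := by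
    rw [← Finset.sum_add_distrib]
    have : ∀ a ∈ Sᶜ, (∑ i ∈ S, wR a i) + (∑ j ∈ Sᶜ, wR a j) = 1 := by
      intro a _
      rw [Finset.sum_add_sum_compl, hwR.2.2 a]
    rw [Finset.sum_congr rfl this, Finset.sum_const, nsmul_eq_mul, mul_one,
      Finset.card_compl, Nat.cast_sub (Finset.card_le_univ S)]
  unfold fit
  linarith

lemma moranStep_sum [Nonempty V] {r : ℝ} (hr : 0 < r) {wR wM : V → V → ℝ}
    (hwR : IsWeightMatrix wR) (hwM : IsWeightMatrix wM) (S : Finset V) :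
    ∑ T, moranStep r wR wM S T = 1 := by
  simp only [moranStep_eq]
  rw [← Finset.sum_div, mnum_sum hwR hwM, div_self (fit_pos hr S).ne']

lemma moranStep_univ_univ [Nonempty V] {r : ℝ} (hr : 0 < r) {wR wM : V → V → ℝ}
    (hwR : IsWeightMatrix wR) (hwM : IsWeightMatrix wM) :
    moranStep r wR wM (univ : Finset V) univ = 1 := by
  rw [moranStep_eq, mnum]
  have hc : (univ : Finset V)ᶜ = (∅ : Finset V) := by simp
  have hM : ∑ i : V, ∑ j : V, r * wM i j = (Fintype.card V : ℝ) * r := by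
    have : ∀ i : V, ∑ j : V, r * wM i j = r := by
      intro i; rw [← Finset.mul_sum, hwM.2.2 i, mul_one]
    rw [Finset.sum_congr rfl fun i _ => this i, Finset.sum_const, nsmul_eq_mul,
      Finset.card_univ, mul_comm]
  rw [hc]
  simp only [Finset.sum_empty, Finset.sum_const_zero, if_pos rfl, add_zero, zero_add]
  rw [hM]
  unfold fit
  rw [Finset.card_univ]
  have hn : (0:ℝ) < (Fintype.card V : ℝ) := by exact_mod_cast Fintype.card_pos
  rw [sub_self, add_zero, if_true, div_self (by positivity)]


lemma fit_compl {r : ℝ} (hr : 0 < r) (S : Finset V) :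
    fit (1/r) Sᶜ = (1/r) * fit r S := by
  unfold fit
  rw [Finset.card_compl, Nat.cast_sub (Finset.card_le_univ S)]
  field_simp
  ring

lemma mnum_compl {r : ℝ} (hr : 0 < r) (wR wM : V → V → ℝ) (S T : Finset V) :
    mnum (1/r) wM wR Sᶜ Tᶜ = (1/r) * mnum r wR wM S T := by
  have hc1 : ∀ j : V, (Tᶜ = insert j Sᶜ) = (T = S.erase j) := by
    intro j
    rw [← Finset.compl_erase, compl_inj_iff]
  have hc2 : ∀ i : V, (Tᶜ = Sᶜ.erase i) = (T = insert i S) := by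
    intro i
    rw [← Finset.compl_insert, compl_inj_iff]
  have hc3 : (Tᶜ = Sᶜ) = (T = S) := by rw [compl_inj_iff]
  unfold mnum
  simp only [compl_compl, hc1, hc2, hc3]
  rw [mul_add, mul_add]
  have e1 : (1/r) * ∑ i ∈ S, ∑ j ∈ Sᶜ, (if T = insert j S then r * wM i j else 0)
      = ∑ j ∈ S, ∑ i ∈ Sᶜ, (if T = insert i S then wM j i else 0) := by
    rw [Finset.mul_sum]
    refine Finset.sum_congr rfl fun i _ => ?_
    rw [Finset.mul_sum]
    refine Finset.sum_congr rfl fun j _ => ?_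
    split
    · field_simp
    · rw [mul_zero]
  have e2 : (1/r) * ∑ j ∈ Sᶜ, ∑ i ∈ S, (if T = S.erase i then wR j i else 0)
      = ∑ i ∈ Sᶜ, ∑ j ∈ S, (if T = S.erase j then 1/r * wR i j else 0) := by
    rw [Finset.mul_sum]
    refine Finset.sum_congr rfl fun i _ => ?_
    rw [Finset.mul_sum]
    refine Finset.sum_congr rfl fun j _ => ?_
    split
    · rfl
    · rw [mul_zero]
  have e3 : (1/r) * (if T = S then (∑ i ∈ S, ∑ j ∈ S, r * wM i j) + (∑ i ∈ Sᶜ, ∑ j ∈ Sᶜ, wR i j) else 0)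
      = (if T = S then (∑ i ∈ Sᶜ, ∑ j ∈ Sᶜ, 1/r * wR i j) + (∑ i ∈ S, ∑ j ∈ S, wM i j) else 0) := by
    split
    · rw [mul_add, add_comm]
      congr 1
      · rw [Finset.mul_sum]
        refine Finset.sum_congr rfl fun i _ => ?_
        rw [Finset.mul_sum]
      · rw [Finset.mul_sum]
        refine Finset.sum_congr rfl fun i _ => ?_
        rw [Finset.mul_sum]
        refine Finset.sum_congr rfl fun j _ => ?_
        field_simp
    · rw [mul_zero]
  rw [e1, e2, e3]
  ring



lemma moranStep_compl {r : ℝ} (hr : 0 < r) (wR wM : V → V → ℝ) (S T : Finset V) :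
    moranStep (1/r) wM wR Sᶜ Tᶜ = moranStep r wR wM S T := by
  rw [moranStep_eq, moranStep_eq, fit_compl hr, mnum_compl hr,
    mul_div_mul_left _ _ (one_div_ne_zero hr.ne')]

def cperm : Equiv.Perm (Finset V) := ⟨fun S => Sᶜ, fun S => Sᶜ, compl_compl, compl_compl⟩

lemma moranIter_compl {r : ℝ} (hr : 0 < r) (wR wM : V → V → ℝ) (t : ℕ) (S T : Finset V) :
    moranIter (1/r) wM wR t Sᶜ Tᶜ = moranIter r wR wM t S T := by
  induction t generalizing S T with
  | zero => simp only [moranIter, compl_inj_iff]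
  | succ t ih =>
    simp only [moranIter]
    rw [← Equiv.sum_comp (cperm : Equiv.Perm (Finset V)) (fun U => moranStep (1/r) wM wR Sᶜ U * moranIter (1/r) wM wR t U Tᶜ)]
    refine Finset.sum_congr rfl fun W _ => ?_
    show moranStep (1/r) wM wR Sᶜ Wᶜ * moranIter (1/r) wM wR t Wᶜ Tᶜ = _
    rw [moranStep_compl hr, ih]


noncomputable def bigD (V : Type*) [Fintype V] (r : ℝ) : ℝ := (Fintype.card V : ℝ) * (r + 1)

lemma bigD_pos [Nonempty V] {r : ℝ} (hr : 0 < r) : 0 < bigD V r := by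
  have h3 : (0 : ℝ) < (Fintype.card V : ℝ) := by exact_mod_cast Fintype.card_pos
  unfold bigD; positivity

lemma fit_le_bigD {r : ℝ} (hr : 0 < r) (S : Finset V) : fit r S ≤ bigD V r := by
  have hcard : (S.card : ℝ) ≤ Fintype.card V := by exact_mod_cast Finset.card_le_univ S
  have : (0:ℝ) ≤ (Fintype.card V : ℝ) - S.card := by linarith
  unfold fit bigD
  nlinarith [Nat.cast_nonneg (α := ℝ) S.card]

/-- The lazified (uniformized) Moran kernel. -/
noncomputable def lazyK (r : ℝ) (wR wM : V → V → ℝ) (S A : Finset V) : ℝ :=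
  (fit r S / bigD V r) * moranStep r wR wM S A +
    (1 - fit r S / bigD V r) * (if A = S then 1 else 0)

lemma hpush (φ : Finset V → ℝ) (c : ℝ) (X : Finset V) :
    ∑ A : Finset V, (if A = X then c else 0) * φ A = c * φ X := by
  simp only [ite_mul, zero_mul]
  rw [Finset.sum_ite_eq']
  simp

lemma mnum_weighted [Nonempty V] {r : ℝ} {wR wM : V → V → ℝ}
    (hwR : IsWeightMatrix wR) (hwM : IsWeightMatrix wM) (S : Finset V) (φ : Finset V → ℝ) :
    ∑ A : Finset V, mnum r wR wM S A * φ A =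
      r * (∑ a ∈ S, ∑ j, wM a j * φ (insert j S)) +
        ∑ a ∈ Sᶜ, ∑ j, wR a j * φ (S.erase j) := by
  have chunk1 : ∑ A : Finset V,
      (∑ i ∈ S, ∑ j ∈ Sᶜ, (if A = insert j S then r * wM i j else 0)) * φ A
      = ∑ i ∈ S, ∑ j ∈ Sᶜ, (r * wM i j) * φ (insert j S) := by
    simp only [Finset.sum_mul]
    rw [Finset.sum_comm]
    refine Finset.sum_congr rfl fun i _ => ?_
    rw [Finset.sum_comm]
    exact Finset.sum_congr rfl fun j _ => hpush φ _ _
  have chunk2 : ∑ A : Finset V,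
      (∑ j ∈ Sᶜ, ∑ i ∈ S, (if A = S.erase i then wR j i else 0)) * φ A
      = ∑ j ∈ Sᶜ, ∑ i ∈ S, wR j i * φ (S.erase i) := by
    simp only [Finset.sum_mul]
    rw [Finset.sum_comm]
    refine Finset.sum_congr rfl fun j _ => ?_
    rw [Finset.sum_comm]
    exact Finset.sum_congr rfl fun i _ => hpush φ _ _
  have chunk3 : ∑ A : Finset V,
      (if A = S then (∑ i ∈ S, ∑ j ∈ S, r * wM i j) + (∑ i ∈ Sᶜ, ∑ j ∈ Sᶜ, wR i j) else 0) * φ A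
      = ((∑ i ∈ S, ∑ j ∈ S, r * wM i j) + (∑ i ∈ Sᶜ, ∑ j ∈ Sᶜ, wR i j)) * φ S :=
    hpush φ _ _
  have lhs_eq : ∑ A : Finset V, mnum r wR wM S A * φ A
      = (∑ i ∈ S, ∑ j ∈ Sᶜ, (r * wM i j) * φ (insert j S))
        + (∑ j ∈ Sᶜ, ∑ i ∈ S, wR j i * φ (S.erase i))
        + ((∑ i ∈ S, ∑ j ∈ S, r * wM i j) + (∑ i ∈ Sᶜ, ∑ j ∈ Sᶜ, wR i j)) * φ S := by
    rw [← chunk1, ← chunk2, ← chunk3, ← Finset.sum_add_distrib, ← Finset.sum_add_distrib]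
    refine Finset.sum_congr rfl fun A _ => ?_
    unfold mnum
    ring
  rw [lhs_eq]
  -- split the RHS full sums
  have rsplitM : ∀ a : V, (∑ j, wM a j * φ (insert j S))
      = (∑ j ∈ S, wM a j) * φ S + ∑ j ∈ Sᶜ, wM a j * φ (insert j S) := by
    intro a
    rw [← Finset.sum_add_sum_compl S (fun j => wM a j * φ (insert j S))]
    congr 1
    rw [Finset.sum_mul]
    refine Finset.sum_congr rfl fun j hj => ?_
    rw [Finset.insert_eq_self.mpr hj]
  have rsplitR : ∀ a : V, (∑ j, wR a j * φ (S.erase j))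
      = ∑ j ∈ S, wR a j * φ (S.erase j) + (∑ j ∈ Sᶜ, wR a j) * φ S := by
    intro a
    rw [← Finset.sum_add_sum_compl S (fun j => wR a j * φ (S.erase j))]
    congr 1
    rw [Finset.sum_mul]
    refine Finset.sum_congr rfl fun j hj => ?_
    rw [Finset.erase_eq_self.mpr (Finset.mem_compl.mp hj)]
  rw [Finset.sum_congr rfl fun a _ => rsplitM a, Finset.sum_congr rfl fun a _ => rsplitR a,
    Finset.sum_add_distrib, Finset.sum_add_distrib]
  have q1 : r * ∑ x ∈ S, ∑ j ∈ Sᶜ, wM x j * φ (insert j S)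
      = ∑ x ∈ S, ∑ j ∈ Sᶜ, r * wM x j * φ (insert j S) := by
    rw [Finset.mul_sum]
    refine Finset.sum_congr rfl fun a _ => ?_
    rw [Finset.mul_sum]
    exact Finset.sum_congr rfl fun j _ => by ring
  have q2 : r * ∑ x ∈ S, ∑ i ∈ S, wM x i * φ S
      = (∑ i ∈ S, ∑ j ∈ S, r * wM i j) * φ S := by
    rw [Finset.mul_sum, Finset.sum_mul]
    refine Finset.sum_congr rfl fun a _ => ?_
    rw [Finset.mul_sum, Finset.sum_mul]
    exact Finset.sum_congr rfl fun j _ => by ring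
  have q3 : ∑ x ∈ Sᶜ, ∑ i ∈ Sᶜ, wR x i * φ S
      = (∑ i ∈ Sᶜ, ∑ j ∈ Sᶜ, wR i j) * φ S := by
    rw [Finset.sum_mul]
    refine Finset.sum_congr rfl fun a _ => ?_
    rw [Finset.sum_mul]
  have q2' : ∑ x ∈ S, (∑ j ∈ S, wM x j) * φ S = ∑ x ∈ S, ∑ i ∈ S, wM x i * φ S :=
    Finset.sum_congr rfl fun a _ => Finset.sum_mul _ _ _
  have q3' : ∑ x ∈ Sᶜ, (∑ j ∈ Sᶜ, wR x j) * φ S = ∑ x ∈ Sᶜ, ∑ i ∈ Sᶜ, wR x i * φ S :=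
    Finset.sum_congr rfl fun a _ => Finset.sum_mul _ _ _
  rw [mul_add, q2']
  linarith [q1, q2, q3, q3']

/-- Weighted-sum expansion of one lazy step. -/
lemma lazyK_expand [Nonempty V] {r : ℝ} (hr : 0 < r) {wR wM : V → V → ℝ}
    (hwR : IsWeightMatrix wR) (hwM : IsWeightMatrix wM) (S : Finset V) (φ : Finset V → ℝ) :
    ∑ A : Finset V, lazyK r wR wM S A * φ A =
      (r * (∑ a ∈ S, ∑ j, wM a j * φ (insert j S)) +
        (∑ a ∈ Sᶜ, ∑ j, wR a j * φ (S.erase j))) / bigD V r +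
      (1 - fit r S / bigD V r) * φ S := by
  have hfit := (fit_pos hr S).ne'
  have step1 : ∀ A, lazyK r wR wM S A * φ A =
      mnum r wR wM S A * φ A / bigD V r +
        (1 - fit r S / bigD V r) * ((if A = S then 1 else 0) * φ A) := by
    intro A
    unfold lazyK
    rw [moranStep_eq]
    have h : fit r S / bigD V r * (mnum r wR wM S A / fit r S)
        = mnum r wR wM S A / bigD V r := by
      rw [div_mul_div_comm, mul_comm (fit r S) (mnum r wR wM S A),
        mul_div_mul_right _ _ hfit]
    rw [add_mul, h]
    ring
  rw [Finset.sum_congr rfl fun A _ => step1 A, Finset.sum_add_distrib, ← Finset.sum_div,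
    ← Finset.mul_sum]
  have step2 : ∑ A : Finset V, (if A = S then (1:ℝ) else 0) * φ A = φ S := by
    have := hpush φ (1:ℝ) S
    rw [this, one_mul]
  rw [step2, mnum_weighted hwR hwM S φ]

lemma lazyK_mono_step [Nonempty V] {r : ℝ} (hr : 0 < r) {wR wM : V → V → ℝ}
    (hwR : IsWeightMatrix wR) (hwM : IsWeightMatrix wM) {S T : Finset V} (hST : S ⊆ T)
    (φ : Finset V → ℝ) (hm : ∀ A B : Finset V, A ⊆ B → φ A ≤ φ B) :
    ∑ A : Finset V, lazyK r wR wM S A * φ A ≤ ∑ A : Finset V, lazyK r wR wM T A * φ A := by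
  have hD := bigD_pos (V := V) hr
  rw [lazyK_expand hr hwR hwM S φ, lazyK_expand hr hwR hwM T φ]
  -- rewrite the lazy parts as fractions over bigD
  have hlazy : ∀ X : Finset V, (1 - fit r X / bigD V r) * φ X
      = (bigD V r - fit r X) * φ X / bigD V r := by
    intro X; field_simp
  rw [hlazy S, hlazy T, ← add_div, ← add_div]
  refine div_le_div_of_nonneg_right ?_ hD.le
  -- notation
  have hTc : Tᶜ ⊆ Sᶜ := compl_subset_compl.mpr hST
  have hsd : Sᶜ \ Tᶜ = T \ S := by
    ext a; simp only [Finset.mem_sdiff, Finset.mem_compl, not_not]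
    tauto
  set c : ℝ := ((T \ S).card : ℝ) with hcdef
  have hc : c = (T.card : ℝ) - S.card := by
    rw [hcdef, Finset.card_sdiff_of_subset hST, Nat.cast_sub (Finset.card_le_card hST)]
  have hMsplit : r * (∑ a ∈ T, ∑ j, wM a j * φ (insert j T))
      = r * (∑ a ∈ T \ S, ∑ j, wM a j * φ (insert j T))
        + r * (∑ a ∈ S, ∑ j, wM a j * φ (insert j T)) := by
    rw [← Finset.sum_sdiff hST, mul_add]
  have hRsplit : (∑ a ∈ Sᶜ, ∑ j, wR a j * φ (S.erase j))
      = (∑ a ∈ T \ S, ∑ j, wR a j * φ (S.erase j))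
        + (∑ a ∈ Tᶜ, ∑ j, wR a j * φ (S.erase j)) := by
    rw [← Finset.sum_sdiff hTc, hsd]
  have i1 : r * (∑ a ∈ S, ∑ j, wM a j * φ (insert j S))
      ≤ r * (∑ a ∈ S, ∑ j, wM a j * φ (insert j T)) := by
    refine mul_le_mul_of_nonneg_left ?_ hr.le
    refine Finset.sum_le_sum fun a _ => Finset.sum_le_sum fun j _ => ?_
    exact mul_le_mul_of_nonneg_left (hm _ _ (Finset.insert_subset_insert j hST)) (hwM.1 a j)
  have i2 : (∑ a ∈ Tᶜ, ∑ j, wR a j * φ (S.erase j))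
      ≤ ∑ a ∈ Tᶜ, ∑ j, wR a j * φ (T.erase j) := by
    refine Finset.sum_le_sum fun a _ => Finset.sum_le_sum fun j _ => ?_
    exact mul_le_mul_of_nonneg_left (hm _ _ (Finset.erase_subset_erase j hST)) (hwR.1 a j)
  have hrow : ∀ a : V, ∑ j, wR a j * φ T = φ T := by
    intro a; rw [← Finset.sum_mul, hwR.2.2 a, one_mul]
  have hrowM : ∀ a : V, ∑ j, wM a j * φ T = φ T := by
    intro a; rw [← Finset.sum_mul, hwM.2.2 a, one_mul]
  have i3 : (∑ a ∈ T \ S, ∑ j, wR a j * φ (S.erase j)) ≤ c * φ T := by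
    have : ∀ a ∈ T \ S, (∑ j, wR a j * φ (S.erase j)) ≤ φ T := by
      intro a _
      rw [← hrow a]
      refine Finset.sum_le_sum fun j _ => ?_
      exact mul_le_mul_of_nonneg_left (hm _ _ ((Finset.erase_subset j S).trans hST)) (hwR.1 a j)
    calc (∑ a ∈ T \ S, ∑ j, wR a j * φ (S.erase j)) ≤ ∑ a ∈ T \ S, φ T :=
          Finset.sum_le_sum this
      _ = c * φ T := by rw [Finset.sum_const, nsmul_eq_mul]
  have i4 : (bigD V r - fit r S) * φ S ≤ (bigD V r - fit r S) * φ T :=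
    mul_le_mul_of_nonneg_left (hm S T hST) (sub_nonneg.mpr (fit_le_bigD hr S))
  have i5 : c * φ T + (bigD V r - fit r S) * φ T
      = r * (c * φ T) + (bigD V r - fit r T) * φ T := by
    unfold fit
    rw [hc]
    ring
  have i6 : r * (c * φ T) ≤ r * (∑ a ∈ T \ S, ∑ j, wM a j * φ (insert j T)) := by
    refine mul_le_mul_of_nonneg_left ?_ hr.le
    have : ∀ a ∈ T \ S, φ T ≤ ∑ j, wM a j * φ (insert j T) := by
      intro a _
      rw [← hrowM a]
      refine Finset.sum_le_sum fun j _ => ?_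
      exact mul_le_mul_of_nonneg_left (hm _ _ (Finset.subset_insert j T)) (hwM.1 a j)
    calc c * φ T = ∑ a ∈ T \ S, φ T := by rw [Finset.sum_const, nsmul_eq_mul]
      _ ≤ _ := Finset.sum_le_sum this
  linarith [i1, i2, i3, i4, i5, i6, hMsplit, hRsplit]


end MirrorAux
-- GLUE PART
namespace MirrorAux
open Finset
variable {V : Type*} [Fintype V] [DecidableEq V]

lemma moranIter_eq_kiter (r : ℝ) (wR wM : V → V → ℝ) (t : ℕ) :
    moranIter r wR wM t = kiter (moranStep r wR wM) t := by
  induction t with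
  | zero => rfl
  | succ t ih => funext S T; simp only [moranIter, kiter, ih]

lemma fixProbFrom_eq_hfix (r : ℝ) (wR wM : V → V → ℝ) (S : Finset V) :
    fixProbFrom r wR wM S = hfix (moranStep r wR wM) S := by
  unfold fixProbFrom hfix
  exact iSup_congr fun t => by rw [moranIter_eq_kiter]

section WithHyps
variable [Nonempty V] {r : ℝ} (hr : 0 < r) {wR wM : V → V → ℝ}
  (hwR : IsWeightMatrix wR) (hwM : IsWeightMatrix wM)

include hr hwR hwM

lemma lazyK_nonneg (S A : Finset V) : 0 ≤ lazyK r wR wM S A := by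
  unfold lazyK
  have h1 : 0 ≤ fit r S / bigD V r := le_of_lt (div_pos (fit_pos hr S) (bigD_pos hr))
  have h2 : fit r S / bigD V r ≤ 1 := by
    rw [div_le_one (bigD_pos (V := V) hr)]
    exact fit_le_bigD hr S
  have h3 : (0:ℝ) ≤ if A = S then (1:ℝ) else 0 := by positivity
  have := moranStep_nonneg hr hwR hwM S A
  have h4 : (0:ℝ) ≤ 1 - fit r S / bigD V r := by linarith
  positivity

lemma lazyK_weighted (S : Finset V) (g : Finset V → ℝ) :
    ∑ A : Finset V, lazyK r wR wM S A * g A =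
      (fit r S / bigD V r) * (∑ A : Finset V, moranStep r wR wM S A * g A) +
        (1 - fit r S / bigD V r) * g S := by
  unfold lazyK
  simp only [add_mul]
  rw [Finset.sum_add_distrib]
  congr 1
  · rw [Finset.mul_sum]
    exact Finset.sum_congr rfl fun A _ => by ring
  · have : ∀ A : Finset V, (1 - fit r S / bigD V r) * (if A = S then (1:ℝ) else 0) * g A
        = (1 - fit r S / bigD V r) * ((if A = S then (1:ℝ) else 0) * g A) := fun A => by ring
    rw [Finset.sum_congr rfl fun A _ => this A, ← Finset.mul_sum]
    have := hpush g (1:ℝ) S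
    rw [this, one_mul]

lemma lazyK_sum (S : Finset V) : ∑ A : Finset V, lazyK r wR wM S A = 1 := by
  have := lazyK_weighted hr hwR hwM S (fun _ => (1:ℝ))
  simp only [mul_one] at this
  rw [this, moranStep_sum hr hwR hwM S]
  ring

lemma lazyK_univ_univ : lazyK r wR wM (univ : Finset V) univ = 1 := by
  unfold lazyK
  rw [moranStep_univ_univ hr hwR hwM, if_pos rfl]
  ring

lemma kiter_lazyK_mono (t : ℕ) : ∀ {S T : Finset V}, S ⊆ T →
    kiter (lazyK r wR wM) t S univ ≤ kiter (lazyK r wR wM) t T univ := by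
  induction t with
  | zero =>
    intro S T hST
    by_cases h : (univ : Finset V) = S
    · have hT : T = univ := Finset.univ_subset_iff.mp (h ▸ hST)
      simp only [kiter, if_pos h, hT, if_pos rfl]
      exact le_refl 1
    · simp only [kiter, if_neg h]
      have : (0:ℝ) ≤ kiter (lazyK r wR wM) 0 T univ :=
        kiter_nonneg (lazyK_nonneg hr hwR hwM) 0 T univ
      simpa [kiter] using this
  | succ t ih =>
    intro S T hST
    have lhs : kiter (lazyK r wR wM) (t+1) S univ
        = ∑ A : Finset V, lazyK r wR wM S A * kiter (lazyK r wR wM) t A univ := rfl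
    have rhs : kiter (lazyK r wR wM) (t+1) T univ
        = ∑ A : Finset V, lazyK r wR wM T A * kiter (lazyK r wR wM) t A univ := rfl
    rw [lhs, rhs]
    exact lazyK_mono_step hr hwR hwM hST _ fun A B hAB => ih hAB

lemma hfix_lazyK_eq (S : Finset V) :
    hfix (lazyK r wR wM) S = hfix (moranStep r wR wM) S := by
  have hP0 := moranStep_nonneg hr hwR hwM
  have hP1 := moranStep_sum hr hwR hwM
  have habsP := moranStep_univ_univ (wR := wR) (wM := wM) hr hwR hwM
  have hK0 := lazyK_nonneg hr hwR hwM
  have hK1 := lazyK_sum hr hwR hwM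
  have habsK := lazyK_univ_univ (wR := wR) (wM := wM) hr hwR hwM
  have hlam : ∀ X : Finset V, (0:ℝ) < fit r X / bigD V r := fun X =>
    div_pos (fit_pos hr X) (bigD_pos hr)
  apply le_antisymm
  · refine hfix_le_harmonic hK0 (hfix (moranStep r wR wM))
      (hfix_nonneg hP0 hP1) (hfix_univ hP0 hP1 habsP) (fun X => ?_) S
    rw [lazyK_weighted hr hwR hwM X]
    rw [← hfix_harmonic hP0 hP1 habsP X]
    ring
  · refine hfix_le_harmonic hP0 (hfix (lazyK r wR wM))
      (hfix_nonneg hK0 hK1) (hfix_univ hK0 hK1 habsK) (fun X => ?_) S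
    have h := hfix_harmonic hK0 hK1 habsK X
    rw [lazyK_weighted hr hwR hwM X] at h
    have h2 : (fit r X / bigD V r) * (∑ A : Finset V, moranStep r wR wM X A * hfix (lazyK r wR wM) A)
        = (fit r X / bigD V r) * hfix (lazyK r wR wM) X := by linarith
    exact mul_left_cancel₀ (hlam X).ne' h2

lemma fixProbFrom_mono {S T : Finset V} (hST : S ⊆ T) :
    fixProbFrom r wR wM S ≤ fixProbFrom r wR wM T := by
  rw [fixProbFrom_eq_hfix, fixProbFrom_eq_hfix, ← hfix_lazyK_eq hr hwR hwM,
    ← hfix_lazyK_eq hr hwR hwM]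
  have hK0 := lazyK_nonneg hr hwR hwM
  have hK1 := lazyK_sum hr hwR hwM
  refine ciSup_le fun t => ?_
  exact le_trans (kiter_lazyK_mono hr hwR hwM t hST) (kiter_le_hfix hK0 hK1 t T)

lemma fix_add_fix_compl_le_one (S : Finset V) :
    fixProbFrom r wR wM S + fixProbFrom (1/r) wM wR Sᶜ ≤ 1 := by
  have hr' : (0:ℝ) < 1/r := by positivity
  have hP0 := moranStep_nonneg hr hwR hwM
  have hP1 := moranStep_sum hr hwR hwM
  have habsP := moranStep_univ_univ (wR := wR) (wM := wM) hr hwR hwM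
  have hQ0 := moranStep_nonneg hr' hwM hwR
  have hQ1 := moranStep_sum hr' hwM hwR
  have habsQ := moranStep_univ_univ (wR := wM) (wM := wR) hr' hwM hwR
  have ea : fixProbFrom r wR wM S = ⨆ t, kiter (moranStep r wR wM) t S univ :=
    fixProbFrom_eq_hfix r wR wM S
  have eb : fixProbFrom (1/r) wM wR Sᶜ = ⨆ t, kiter (moranStep (1/r) wM wR) t Sᶜ univ :=
    fixProbFrom_eq_hfix (1/r) wM wR Sᶜ
  rw [ea, eb]
  refine sup_add_sup_le_one (kiter_univ_mono hP0 habsP S) (kiter_univ_mono hQ0 habsQ Sᶜ)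
    (bddAbove_kiter hP0 hP1 S) (bddAbove_kiter hQ0 hQ1 Sᶜ) (fun t => ?_)
  have hdual : kiter (moranStep (1/r) wM wR) t Sᶜ univ = kiter (moranStep r wR wM) t S ∅ := by
    rw [← moranIter_eq_kiter, ← moranIter_eq_kiter, ← Finset.compl_empty (α := V),
      moranIter_compl hr]
  rw [hdual]
  have hpair : kiter (moranStep r wR wM) t S univ + kiter (moranStep r wR wM) t S ∅
      = ∑ T ∈ ({univ, ∅} : Finset (Finset V)), kiter (moranStep r wR wM) t S T := by
    rw [Finset.sum_pair (Finset.univ_nonempty.ne_empty)]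
  rw [hpair]
  calc ∑ T ∈ ({univ, ∅} : Finset (Finset V)), kiter (moranStep r wR wM) t S T
      ≤ ∑ T : Finset V, kiter (moranStep r wR wM) t S T :=
        Finset.sum_le_sum_of_subset_of_nonneg (Finset.subset_univ _)
          (fun T _ _ => kiter_nonneg hP0 t S T)
    _ = 1 := kiter_sum hP1 t S

end WithHyps

lemma two_le_card {V : Type*} [Fintype V] [DecidableEq V] [Nonempty V]
    {w : V → V → ℝ} (hw : IsWeightMatrix w) : 2 ≤ Fintype.card V := by
  by_contra h
  push_neg at h
  interval_cases hcard : Fintype.card V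
  · exact absurd hcard Fintype.card_ne_zero
  · obtain ⟨a, ha⟩ := Fintype.card_eq_one_iff.mp hcard
    have huniv : (univ : Finset V) = {a} := by
      ext b; simp [ha b]
    have := hw.2.2 a
    rw [huniv, Finset.sum_singleton, hw.2.1 a] at this
    norm_num at this

end MirrorAux

/-- **Mirror lemma.** For the two-graph Moran process started from a single uniformly
random mutant, with strongly connected resident graph `wR` and mutant graph `wM` and
relative fitness `r > 0`, the fixation probability satisfies
`f_{G_R,G_M}(r) ≤ 1 − f_{G_M,G_R}(1/r)`. -/
theorem mirror_lemma
    {V : Type*} [Fintype V] [DecidableEq V] [Nonempty V]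
    (r : ℝ) (hr : 0 < r) (wR wM : V → V → ℝ)
    (hwR : IsWeightMatrix wR) (hwM : IsWeightMatrix wM)
    (hscR : StronglyConnectedW wR) (hscM : StronglyConnectedW wM) :
    fixProb r wR wM ≤ 1 - fixProb (1 / r) wM wR := by
  classical
  have hr' : (0:ℝ) < 1/r := by positivity
  have h2 : 2 ≤ Fintype.card V := MirrorAux.two_le_card hwR
  have hn0 : (0:ℝ) < (Fintype.card V : ℝ) := by
    have : 0 < Fintype.card V := Fintype.card_pos
    exact_mod_cast this
  have hn1 : (0:ℝ) < (Fintype.card V : ℝ) - 1 := by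
    have : (2:ℝ) ≤ (Fintype.card V : ℝ) := by exact_mod_cast h2
    linarith
  set f : V → ℝ := fun u => fixProbFrom r wR wM {u} with hf
  set g : V → ℝ := fun u => fixProbFrom (1/r) wM wR {u} with hg
  set C : ℝ := ∑ u : V, fixProbFrom (1/r) wM wR ({u}ᶜ) with hC
  have step1 : ∀ u : V, f u ≤ 1 - fixProbFrom (1/r) wM wR ({u}ᶜ) := by
    intro u
    have := MirrorAux.fix_add_fix_compl_le_one hr hwR hwM {u}
    simp only [hf]
    linarith
  have hA : (∑ u, f u) ≤ (Fintype.card V : ℝ) - C := by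
    calc ∑ u, f u ≤ ∑ u : V, (1 - fixProbFrom (1/r) wM wR ({u}ᶜ)) :=
          Finset.sum_le_sum fun u _ => step1 u
      _ = (Fintype.card V : ℝ) - C := by
          rw [Finset.sum_sub_distrib, Finset.sum_const, Finset.card_univ, nsmul_eq_mul,
            mul_one, hC]
  have hBC : (∑ u, g u) ≤ C := by
    have per_u : ∀ u : V, ∑ v ∈ Finset.univ.erase u, g v
        ≤ ((Fintype.card V : ℝ) - 1) * fixProbFrom (1/r) wM wR ({u}ᶜ) := by
      intro u
      have hbound : ∀ v ∈ Finset.univ.erase u, g v ≤ fixProbFrom (1/r) wM wR ({u}ᶜ) := by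
        intro v hv
        have hvne : v ≠ u := (Finset.mem_erase.mp hv).1
        refine MirrorAux.fixProbFrom_mono hr' hwM hwR ?_
        exact Finset.singleton_subset_iff.mpr
          (Finset.mem_compl.mpr (fun hmem => hvne (Finset.mem_singleton.mp hmem)))
      calc ∑ v ∈ Finset.univ.erase u, g v
          ≤ ∑ _v ∈ Finset.univ.erase u, fixProbFrom (1/r) wM wR ({u}ᶜ) :=
            Finset.sum_le_sum hbound
        _ = ((Fintype.card V : ℝ) - 1) * fixProbFrom (1/r) wM wR ({u}ᶜ) := by
            rw [Finset.sum_const, Finset.card_erase_of_mem (Finset.mem_univ u),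
              Finset.card_univ, nsmul_eq_mul, Nat.cast_sub (by omega), Nat.cast_one]
    have hsum_erase : ∀ u : V, ∑ v ∈ Finset.univ.erase u, g v = (∑ v, g v) - g u :=
      fun u => Finset.sum_erase_eq_sub (Finset.mem_univ u)
    have htot : ((Fintype.card V : ℝ) - 1) * (∑ u, g u)
        ≤ ((Fintype.card V : ℝ) - 1) * C := by
      have h1 : ∑ u : V, ((∑ v, g v) - g u)
          ≤ ∑ u : V, ((Fintype.card V : ℝ) - 1) * fixProbFrom (1/r) wM wR ({u}ᶜ) := by
        refine Finset.sum_le_sum fun u _ => ?_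
        rw [← hsum_erase u]
        exact per_u u
      have h2' : ∑ u : V, ((∑ v, g v) - g u)
          = ((Fintype.card V : ℝ) - 1) * (∑ u, g u) := by
        rw [Finset.sum_sub_distrib, Finset.sum_const, Finset.card_univ, nsmul_eq_mul]
        ring
      have h3' : ∑ u : V, ((Fintype.card V : ℝ) - 1) * fixProbFrom (1/r) wM wR ({u}ᶜ)
          = ((Fintype.card V : ℝ) - 1) * C := by
        rw [hC, Finset.mul_sum]
      linarith
    exact le_of_mul_le_mul_left htot hn1
  have main : (∑ u, f u) ≤ (Fintype.card V : ℝ) - (∑ u, g u) := by linarith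
  have final : (∑ u, f u) / (Fintype.card V : ℝ)
      ≤ ((Fintype.card V : ℝ) - (∑ u, g u)) / (Fintype.card V : ℝ) :=
    div_le_div_of_nonneg_right main hn0.le
  have expand : ((Fintype.card V : ℝ) - (∑ u, g u)) / (Fintype.card V : ℝ)
      = 1 - (∑ u, g u) / (Fintype.card V : ℝ) := by
    rw [sub_div, div_self hn0.ne']
  rw [expand] at final
  exact final
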